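/- Let f : U → V be a map in the set-up and let X be a finite union of puzzle pieces. Then for every z ∈ D(X) ∖ X, the sets L_z(X), f(L_z(X)), …, f^{k(z)−1}(L_z(X)) are pairwise disjoint. -/

import Mathlib

open Set Function Topology

noncomputable section

/-- A (bounded) Jordan domain in the plane: a bounded connected open set whose
frontier is a Jordan curve, i.e. an injective continuous image of the circle. -/
def IsJordanDomain (Ω : Set ℂ) : Prop :=
  IsOpen Ω ∧ IsConnected Ω ∧ Bornology.IsBounded Ω ∧
  ∃ g : Metric.sphere (0:ℂ) 1 → ℂ, Continuous g ∧ Function.Injective g ∧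
    Set.range g = frontier Ω

/-- `A` is strictly contained in `X`: it is a proper subset of some connected
component of `X`. -/
def StrictlyContainedIn (A X : Set ℂ) : Prop :=
  ∃ x ∈ X, A ⊂ connectedComponentIn X x

/-- The set-up: `V ⊆ ℂ` is open with finitely many components, each a bounded Jordan
domain, with pairwise disjoint closures; `U` is open with closure contained in `V`,
with finitely many components with pairwise disjoint closures; `f : U → V` is proper
holomorphic; every critical point of `f` lies in `K_f`. -/
structure Setup where
  U : Set ℂ
  V : Set ℂ
  f : ℂ → ℂ
  hV_open : IsOpen V
  hV_comp_finite : {C : Set ℂ | ∃ x ∈ V, C = connectedComponentIn V x}.Finite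
  hV_jordan : ∀ x ∈ V, IsJordanDomain (connectedComponentIn V x)
  hV_disj : ∀ x ∈ V, ∀ y ∈ V, connectedComponentIn V x ≠ connectedComponentIn V y →
    closure (connectedComponentIn V x) ∩ closure (connectedComponentIn V y) = ∅
  hU_open : IsOpen U
  hUV : closure U ⊆ V
  hU_comp_finite : {C : Set ℂ | ∃ x ∈ U, C = connectedComponentIn U x}.Finite
  hU_disj : ∀ x ∈ U, ∀ y ∈ U, connectedComponentIn U x ≠ connectedComponentIn U y →
    closure (connectedComponentIn U x) ∩ closure (connectedComponentIn U y) = ∅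
  hf_maps : Set.MapsTo f U V
  hf_holo : DifferentiableOn ℂ f U
  hf_proper : ∀ K ⊆ V, IsCompact K → IsCompact (U ∩ f ⁻¹' K)
  hf_crit : ∀ z ∈ U, deriv f z = 0 → ∀ n : ℕ, f^[n] z ∈ U

namespace Setup

variable (S : Setup)

/-- `K_f = {z ∈ U : f^n(z) ∈ U for all n}`. -/
def K : Set ℂ := {z | z ∈ S.U ∧ ∀ n : ℕ, S.f^[n] z ∈ S.U}

/-- The set of critical points of `f`. -/
def Crit : Set ℂ := {z | z ∈ S.U ∧ deriv S.f z = 0}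

/-- `preV n = f^{-n}(V)`, preimages being taken for the partial map `f : U → V`. -/
def preV : ℕ → Set ℂ
  | 0 => S.V
  | n+1 => S.U ∩ S.f ⁻¹' (preV n)

/-- `P` is a puzzle piece of depth `n`: a connected component of `f^{-n}(V)`. -/
def IsPieceOfDepth (n : ℕ) (P : Set ℂ) : Prop :=
  ∃ x ∈ S.preV n, P = connectedComponentIn (S.preV n) x

/-- `P` is a puzzle piece. -/
def IsPiece (P : Set ℂ) : Prop := ∃ n, S.IsPieceOfDepth n P

/-- `piece n x = P_n(x)`, the puzzle piece of depth `n` containing `x`. -/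
def piece (n : ℕ) (x : ℂ) : Set ℂ := connectedComponentIn (S.preV n) x

/-- `X` is a finite union of puzzle pieces. -/
def IsPieceUnion (X : Set ℂ) : Prop :=
  ∃ P : Set (Set ℂ), P.Finite ∧ (∀ Q ∈ P, S.IsPiece Q) ∧ X = ⋃₀ P

/-- `X` is nice: for every connected component `P` of `X` and every `n ≥ 1`,
`f^n(P)` is not strictly contained in `X`. -/
def Nice (X : Set ℂ) : Prop :=
  ∀ x ∈ X, ∀ n : ℕ, 1 ≤ n →
    ¬ StrictlyContainedIn (S.f^[n] '' connectedComponentIn X x) X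

/-- `preIm X n = f^{-n}(X)`, preimages being taken for the partial map `f : U → V`. -/
def preIm (X : Set ℂ) : ℕ → Set ℂ
  | 0 => X
  | n+1 => S.U ∩ S.f ⁻¹' (preIm X n)

/-- `D(X) = ⋃_{k ≥ 0} f^{-k}(X)`. -/
def D (X : Set ℂ) : Set ℂ := ⋃ k, S.preIm X k

/-- For `z ∈ D(X) ∖ X`, `k` is the landing time `k(z)`: the minimal positive
integer with `f^k(z) ∈ X`. -/
def IsLandingTime (X : Set ℂ) (z : ℂ) (k : ℕ) : Prop :=
  1 ≤ k ∧ S.f^[k] z ∈ X ∧ ∀ j, 1 ≤ j → j < k → S.f^[j] z ∉ X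

/-- `landComp X z k = Comp_z(f^{-k}(Comp_{f^k(z)}(X)))`; for `k = k(z)` this is
`L_z(X)`. -/
def landComp (X : Set ℂ) (z : ℂ) (k : ℕ) : Set ℂ :=
  connectedComponentIn (S.preIm (connectedComponentIn X (S.f^[k] z)) k) z

/-- `x` combinatorially accumulates to `y`: for every `n ≥ 0` there is `j ≥ 1`
with `f^j(x) ∈ P_n(y)`. -/
def Acc (x y : ℂ) : Prop := ∀ n : ℕ, ∃ j : ℕ, 1 ≤ j ∧ S.f^[j] x ∈ S.piece n y

/-- `Forw(x) = {y ∈ K_f : x → y}`. -/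
def Forw (x : ℂ) : Set ℂ := {y | y ∈ S.K ∧ S.Acc x y}

/-- The equivalence `c1 ∼ c2` on critical points. -/
def Equiv (c1 c2 : ℂ) : Prop := c1 = c2 ∨ (S.Acc c1 c2 ∧ S.Acc c2 c1)

/-- The class `[c]` of a critical point `c`. -/
def cls (c : ℂ) : Set ℂ := {c' | c' ∈ S.Crit ∧ S.Equiv c c'}

/-- `D(f) = Crit(f)/∼`, the set of equivalence classes. -/
def classes : Set (Set ℂ) := {A | ∃ c ∈ S.Crit, A = S.cls c}

/-- `[c1] → [c2]`. -/
def ClassAcc (A B : Set ℂ) : Prop := ∃ c1 ∈ A, ∃ c2 ∈ B, S.Acc c1 c2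

/-- The partial order on classes: `A ≤ B` iff `A = B` or `B → A`. -/
def ClassLe (A B : Set ℂ) : Prop := A = B ∨ S.ClassAcc B A

/-- The minimal elements of a family of classes w.r.t. `ClassLe`. -/
def minimalsIn (T : Set (Set ℂ)) : Set (Set ℂ) :=
  {A | A ∈ T ∧ ∀ B ∈ T, S.ClassLe B A → B = A}

/-- Auxiliary: `(D_k(f), D_0(f) ∪ ⋯ ∪ D_k(f))`. -/
def DlevelAux : ℕ → Set (Set ℂ) × Set (Set ℂ)
  | 0 => (S.minimalsIn S.classes, S.minimalsIn S.classes)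
  | k+1 =>
      (S.minimalsIn (S.classes \ (DlevelAux k).2),
        (DlevelAux k).2 ∪ S.minimalsIn (S.classes \ (DlevelAux k).2))

/-- `Dlevel k = D_k(f)`. -/
def Dlevel (k : ℕ) : Set (Set ℂ) := (S.DlevelAux k).1

/-- Each connected component of `V` contains at most one critical point. -/
def OneCritPerComp : Prop :=
  ∀ c ∈ S.Crit, ∀ c' ∈ S.Crit,
    connectedComponentIn S.V c = connectedComponentIn S.V c' → c = c'

/-- Assumption (∗∗): if `c` does not combinatorially accumulate to `c'`, then
`f^j(c) ∉ P_0(c')` for all `j ≥ 1`. -/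
def StarStar : Prop :=
  ∀ c ∈ S.Crit, ∀ c' ∈ S.Crit, ¬ S.Acc c c' →
    ∀ j : ℕ, 1 ≤ j → S.f^[j] c ∉ S.piece 0 c'

/-- `K_f(x)`, the connected component of `K_f` containing `x`. -/
def Kcomp (x : ℂ) : Set ℂ := connectedComponentIn S.K x

/-- `P_{n+k}(c1)` is a child of `P_n(c2)`: `f^k(P_{n+k}(c1)) = P_n(c2)` and
`f^{k-1}` maps `P_{n+k-1}(f(c1))` conformally onto `P_n(c2)`. -/
def IsChild (c1 : ℂ) (k : ℕ) (n : ℕ) (c2 : ℂ) : Prop :=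
  1 ≤ k ∧ S.f^[k] '' S.piece (n+k) c1 = S.piece n c2 ∧
  Set.InjOn (S.f^[k-1]) (S.piece (n+k-1) (S.f c1)) ∧
  S.f^[k-1] '' S.piece (n+k-1) (S.f c1) = S.piece n c2

/-- `c` is persistently recurrent: for every `n ≥ 0` and every `c' ∈ [c]`,
`P_n(c')` has only finitely many children. -/
def PersistentlyRecurrent (c : ℂ) : Prop :=
  ∀ n : ℕ, ∀ c' ∈ S.cls c,
    {Q : Set ℂ | ∃ c1 ∈ S.cls c, ∃ k : ℕ, S.IsChild c1 k n c' ∧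
      Q = S.piece (n+k) c1}.Finite

/-- `Crit_n(f)`. -/
def CritN : Set ℂ := {c | c ∈ S.Crit ∧ ∀ c' ∈ S.Crit, ¬ S.Acc c c'}

/-- `Crit_e(f)`. -/
def CritE : Set ℂ := {c | c ∈ S.Crit ∧ ¬ S.Acc c c ∧ ∃ c' ∈ S.Crit, S.Acc c c'}

/-- `Crit_r(f)`. -/
def CritR : Set ℂ := {c | c ∈ S.Crit ∧ S.Acc c c ∧ ¬ S.PersistentlyRecurrent c}

/-- `Crit_p(f)`. -/
def CritP : Set ℂ := {c | c ∈ S.Crit ∧ S.Acc c c ∧ S.PersistentlyRecurrent c}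

end Setup


namespace Setup

variable (S : Setup)

lemma hU_subset_V' : S.U ⊆ S.V := subset_closure.trans S.hUV

lemma preV_succ_subset' : ∀ n, S.preV (n+1) ⊆ S.preV n := by
  intro n
  induction n with
  | zero => exact fun x hx => S.hU_subset_V' hx.1
  | succ n ih => exact fun x hx => ⟨hx.1, ih hx.2⟩

lemma preV_mono' {m n : ℕ} (h : m ≤ n) : S.preV n ⊆ S.preV m := by
  induction n, h using Nat.le_induction with
  | base => exact subset_rfl
  | succ n hmn ih => exact (S.preV_succ_subset' n).trans ih

lemma preV_open' : ∀ n, IsOpen (S.preV n)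
  | 0 => S.hV_open
  | (n+1) =>
      S.hf_holo.continuousOn.isOpen_inter_preimage S.hU_open (preV_open' n)

lemma preIm_mono' {A B : Set ℂ} (h : A ⊆ B) : ∀ n, S.preIm A n ⊆ S.preIm B n
  | 0 => h
  | (n+1) => fun x hx => ⟨hx.1, preIm_mono' h n hx.2⟩

lemma preIm_preV' (n : ℕ) : ∀ m, S.preIm (S.preV n) m = S.preV (n + m)
  | 0 => rfl
  | (m+1) => by
      show S.U ∩ S.f ⁻¹' (S.preIm (S.preV n) m) = S.preV (n + m + 1)
      rw [preIm_preV' n m]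
      rfl

lemma mem_preIm' {A : Set ℂ} : ∀ (m : ℕ) (a : ℂ),
    a ∈ S.preIm A m ↔ (∀ s < m, S.f^[s] a ∈ S.U) ∧ S.f^[m] a ∈ A
  | 0, a => by simp [Setup.preIm]
  | (m+1), a => by
      constructor
      · rintro ⟨haU, ha⟩
        have ha' : S.f a ∈ S.preIm A m := ha
        rw [mem_preIm' m (S.f a)] at ha'
        refine ⟨fun s hs => ?_, ?_⟩
        · cases s with
          | zero => simpa using haU
          | succ s =>
            rw [Function.iterate_succ_apply]
            exact ha'.1 s (by omega)
        · rw [Function.iterate_succ_apply]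
          exact ha'.2
      · rintro ⟨hU, hA⟩
        refine ⟨by simpa using hU 0 (by omega), ?_⟩
        show S.f a ∈ S.preIm A m
        rw [mem_preIm' m (S.f a)]
        refine ⟨fun s hs => ?_, ?_⟩
        · rw [← Function.iterate_succ_apply]
          exact hU (s+1) (by omega)
        · rw [← Function.iterate_succ_apply]
          exact hA

lemma preIm_iterate_mem' {A : Set ℂ} {m t : ℕ} (ht : t ≤ m) {a : ℂ}
    (ha : a ∈ S.preIm A m) : S.f^[t] a ∈ S.preIm A (m - t) := by
  rw [S.mem_preIm'] at ha ⊢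
  refine ⟨fun s hs => ?_, ?_⟩
  · rw [← Function.iterate_add_apply]
    exact ha.1 (s + t) (by omega)
  · rw [← Function.iterate_add_apply, show m - t + t = m by omega]
    exact ha.2

lemma contOn_iterate' : ∀ (t : ℕ) (A : Set ℂ),
    (∀ a ∈ A, ∀ s < t, S.f^[s] a ∈ S.U) → ContinuousOn (S.f^[t]) A
  | 0, A, _ => by simpa using continuousOn_id
  | (t+1), A, h => by
      rw [Function.iterate_succ']
      exact (S.hf_holo.continuousOn).comp
        (contOn_iterate' t A fun a ha s hs => h a ha s (by omega))
        (fun a ha => h a ha t (by omega))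

lemma piece_subset_piece' {m m' : ℕ} (h : m' ≤ m) {x x' w : ℂ}
    (hw : w ∈ connectedComponentIn (S.preV m) x)
    (hw' : w ∈ connectedComponentIn (S.preV m') x') :
    connectedComponentIn (S.preV m) x ⊆ connectedComponentIn (S.preV m') x' := by
  have h1 := connectedComponentIn_mono w (S.preV_mono' h)
  rw [connectedComponentIn_eq hw, connectedComponentIn_eq hw']
  exact h1

/-- Every connected component of a finite union of puzzle pieces is itself a
puzzle piece. -/
lemma comp_of_pieceUnion_is_piece {X : Set ℂ} (hX : S.IsPieceUnion X) {y : ℂ}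
    (hy : y ∈ X) :
    ∃ n, connectedComponentIn X y = connectedComponentIn (S.preV n) y := by
  obtain ⟨P, hfin, hP, rfl⟩ := hX
  set C := connectedComponentIn (⋃₀ P) y with hCdef
  have hyC : y ∈ C := mem_connectedComponentIn hy
  -- basic facts about the pieces
  have hdata : ∀ Q ∈ P, ∃ n, ∃ x ∈ S.preV n, Q = connectedComponentIn (S.preV n) x := by
    intro Q hQ
    obtain ⟨n, x, hx, hQx⟩ := hP Q hQ
    exact ⟨n, x, hx, hQx⟩
  have hconn : ∀ Q ∈ P, IsPreconnected Q := by
    intro Q hQ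
    obtain ⟨n, x, hx, rfl⟩ := hdata Q hQ
    exact isPreconnected_connectedComponentIn
  have hopen : ∀ Q ∈ P, IsOpen Q := by
    intro Q hQ
    obtain ⟨n, x, hx, rfl⟩ := hdata Q hQ
    exact (S.preV_open' n).connectedComponentIn
  have hne : ∀ Q ∈ P, Q.Nonempty := by
    intro Q hQ
    obtain ⟨n, x, hx, rfl⟩ := hdata Q hQ
    exact ⟨x, mem_connectedComponentIn hx⟩
  -- pieces meeting C are inside C
  have hPC : ∀ Q ∈ P, (Q ∩ C).Nonempty → Q ⊆ C := by
    rintro Q hQ ⟨w, hwQ, hwC⟩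
    have hwC' : w ∈ connectedComponentIn (⋃₀ P) y := hwC
    have h1 : Q ⊆ connectedComponentIn (⋃₀ P) w :=
      (hconn Q hQ).subset_connectedComponentIn hwQ (subset_sUnion_of_mem hQ)
    rw [hCdef, connectedComponentIn_eq hwC']
    exact h1
  -- comparability of intersecting pieces
  have hcomp : ∀ Q ∈ P, ∀ Q' ∈ P, (Q ∩ Q').Nonempty → Q ⊆ Q' ∨ Q' ⊆ Q := by
    rintro Q hQ Q' hQ' ⟨w, hwQ, hwQ'⟩
    obtain ⟨n, x, hx, rfl⟩ := hdata Q hQ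
    obtain ⟨n', x', hx', rfl⟩ := hdata Q' hQ'
    rcases le_total n' n with h | h
    · exact Or.inl (S.piece_subset_piece' h hwQ hwQ')
    · exact Or.inr (S.piece_subset_piece' h hwQ' hwQ)
  -- the subfamily inside C and a maximal element
  obtain ⟨P0, hP0, hyP0⟩ := hy
  have hP0' : P0 ∈ P ∧ P0 ⊆ C := ⟨hP0, hPC P0 hP0 ⟨y, hyP0, hyC⟩⟩
  obtain ⟨Pm, hPm, hmax⟩ :=
    Set.Finite.exists_maximalFor id {Q | Q ∈ P ∧ Q ⊆ C}
      (hfin.subset (fun Q hQ => hQ.1)) ⟨P0, hP0'⟩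
  -- dichotomy
  have hdich : ∀ Q, Q ∈ P ∧ Q ⊆ C → Q ⊆ Pm ∨ Q ∩ Pm = ∅ := by
    intro Q hQ
    by_cases hint : (Q ∩ Pm).Nonempty
    · rcases hcomp Q hQ.1 Pm hPm.1 hint with h | h
      · exact Or.inl h
      · left
        have := hmax hQ h
        simp only [id] at this
        exact this
    · exact Or.inr (Set.not_nonempty_iff_eq_empty.mp hint)
  -- C ⊆ Pm via connectedness
  set R : Set ℂ := ⋃₀ {Q | (Q ∈ P ∧ Q ⊆ C) ∧ ¬ Q ⊆ Pm} with hRdef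
  have hRopen : IsOpen R := isOpen_sUnion fun Q hQ => hopen Q hQ.1.1
  have hCsub : C ⊆ Pm ∪ R := by
    intro c hc
    obtain ⟨Q, hQ, hcQ⟩ := connectedComponentIn_subset _ _ hc
    have hQ' : Q ∈ P ∧ Q ⊆ C := ⟨hQ, hPC Q hQ ⟨c, hcQ, hc⟩⟩
    by_cases hQPm : Q ⊆ Pm
    · exact Or.inl (hQPm hcQ)
    · exact Or.inr ⟨Q, ⟨hQ', hQPm⟩, hcQ⟩
  have hdisj : Pm ∩ R = ∅ := by
    rw [Set.eq_empty_iff_forall_notMem]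
    rintro w ⟨hwPm, Q, ⟨hQ', hQPm⟩, hwQ⟩
    rcases hdich Q hQ' with h | h
    · exact hQPm h
    · exact absurd h (Set.nonempty_iff_ne_empty.mp ⟨w, hwQ, hwPm⟩)
  have hPmne : Pm.Nonempty := hne Pm hPm.1
  have hCPm : C ⊆ Pm := by
    by_contra hcon
    have hCR : (C ∩ R).Nonempty := by
      obtain ⟨c, hc, hcPm⟩ := Set.not_subset.mp hcon
      rcases hCsub hc with h | h
      · exact absurd h hcPm
      · exact ⟨c, hc, h⟩
    have hCPm' : (C ∩ Pm).Nonempty := by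
      obtain ⟨w, hw⟩ := hPmne
      exact ⟨w, hPm.2 hw, hw⟩
    have := isPreconnected_connectedComponentIn (x := y) (F := ⋃₀ P)
      Pm R (hopen Pm hPm.1) hRopen hCsub hCPm' hCR
    obtain ⟨w, _, hw2⟩ := this
    rw [Set.eq_empty_iff_forall_notMem] at hdisj
    exact hdisj w hw2
  have hCeq : C = Pm := le_antisymm hCPm hPm.2
  obtain ⟨n, x, hx, hPmx⟩ := hdata Pm hPm.1
  refine ⟨n, ?_⟩
  have hyPm : y ∈ connectedComponentIn (S.preV n) x := by rw [← hPmx, ← hCeq]; exact hyC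
  rw [hCeq, hPmx]
  exact connectedComponentIn_eq hyPm

end Setup

/-- For a map in the set-up and a finite union `X` of puzzle pieces,
for every `z ∈ D(X) ∖ X` the sets `L_z(X), f(L_z(X)), …, f^{k(z)-1}(L_z(X))`
are pairwise disjoint. -/
theorem stmt_0 (S : Setup) (X : Set ℂ) (hX : S.IsPieceUnion X)
    (z : ℂ) (hz : z ∈ S.D X \ X) (k : ℕ) (hk : S.IsLandingTime X z k) :
    ∀ i < k, ∀ j < k, i ≠ j →
      Disjoint (S.f^[i] '' S.landComp X z k) (S.f^[j] '' S.landComp X z k) := by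
  obtain ⟨hk1, hkX, hkmin⟩ := hk
  set C := connectedComponentIn X (S.f^[k] z) with hCdef
  obtain ⟨n, hCn⟩ := S.comp_of_pieceUnion_is_piece hX hkX
  set L := S.landComp X z k with hLdef
  -- z belongs to preIm C k
  obtain ⟨m, hm⟩ := mem_iUnion.mp hz.1
  rw [S.mem_preIm'] at hm
  have hm1 : 1 ≤ m := by
    rcases Nat.eq_zero_or_pos m with h | h
    · exfalso; apply hz.2; have := hm.2; rwa [h] at this
    · exact h
  have hkm : k ≤ m := by
    by_contra h
    exact hkmin m hm1 (lt_of_not_ge h) hm.2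
  have hzP : z ∈ S.preIm C k := by
    rw [S.mem_preIm']
    exact ⟨fun s hs => hm.1 s (lt_of_lt_of_le hs hkm), mem_connectedComponentIn hkX⟩
  have hzL : z ∈ L := mem_connectedComponentIn hzP
  have hLsub : L ⊆ S.preIm C k := connectedComponentIn_subset _ _
  have hCsubV : C ⊆ S.preV n := by rw [hCdef, hCn]; exact connectedComponentIn_subset _ _
  have hUorbit : ∀ a ∈ L, ∀ s < k, S.f^[s] a ∈ S.U := fun a ha s hs =>
    ((S.mem_preIm' k a).mp (hLsub ha)).1 s hs
  have hLconn : IsPreconnected L := isPreconnected_connectedComponentIn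
  -- the image of L under f^[t] is in the piece of depth n + (k - t) at f^[t] z
  have himg : ∀ t ≤ k, S.f^[t] '' L ⊆
      connectedComponentIn (S.preV (n + (k - t))) (S.f^[t] z) := by
    intro t ht
    apply IsPreconnected.subset_connectedComponentIn
    · exact hLconn.image _
        (S.contOn_iterate' t L fun a ha s hs => hUorbit a ha s (lt_of_lt_of_le hs ht))
    · exact mem_image_of_mem _ hzL
    · rintro w ⟨a, haL, rfl⟩
      have h1 : S.f^[t] a ∈ S.preIm C (k - t) := S.preIm_iterate_mem' ht (hLsub haL)
      have h2 := S.preIm_mono' hCsubV (k - t) h1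
      rwa [S.preIm_preV'] at h2
  -- the key disjointness for i < j
  have key : ∀ i j, i < j → j < k →
      Disjoint (S.f^[i] '' L) (S.f^[j] '' L) := by
    intro i j hij hjk
    rw [Set.disjoint_left]
    intro x hxi hxj
    have hik : i ≤ k := by omega
    have hjk' : j ≤ k := by omega
    set Qj := connectedComponentIn (S.preV (n + (k - j))) (S.f^[j] z) with hQjdef
    have hQij : connectedComponentIn (S.preV (n + (k - i))) (S.f^[i] z) ⊆ Qj :=
      S.piece_subset_piece' (by omega) (himg i hik hxi) (himg j hjk' hxj)
    have hQjsub : Qj ⊆ S.preIm (S.preV n) (k - j) := by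
      rw [S.preIm_preV']
      exact connectedComponentIn_subset _ _
    have hQjU : ∀ a ∈ Qj, ∀ s < k - j, S.f^[s] a ∈ S.U := fun a ha s hs =>
      ((S.mem_preIm' _ _).mp (hQjsub ha)).1 s hs
    have hfjz : S.f^[j] z ∈ Qj := by
      apply mem_connectedComponentIn
      have h1 : S.f^[j] z ∈ S.preIm C (k - j) := S.preIm_iterate_mem' hjk' hzP
      have h2 := S.preIm_mono' hCsubV (k - j) h1
      rwa [S.preIm_preV'] at h2
    have himQ : S.f^[k - j] '' Qj ⊆ C := by
      rw [hCdef, hCn]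
      apply IsPreconnected.subset_connectedComponentIn
        (isPreconnected_connectedComponentIn.image _ (S.contOn_iterate' _ _ hQjU))
      · refine ⟨S.f^[j] z, hfjz, ?_⟩
        rw [← Function.iterate_add_apply, show k - j + j = k by omega]
      · rintro w ⟨a, ha, rfl⟩
        have h1 := S.preIm_iterate_mem' (le_refl (k - j)) (hQjsub ha)
        rw [Nat.sub_self] at h1
        exact h1
    -- contradiction with minimality of the landing time
    have hfiz : S.f^[i] z ∈ Qj := hQij (himg i hik (mem_image_of_mem _ hzL))
    have hX' : S.f^[k - j + i] z ∈ X := by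
      have h1 : S.f^[k - j] (S.f^[i] z) ∈ C := himQ (mem_image_of_mem _ hfiz)
      rw [← Function.iterate_add_apply] at h1
      exact connectedComponentIn_subset _ _ h1
    exact hkmin (k - j + i) (by omega) (by omega) hX'
  intro i hi j hj hne
  rcases lt_or_gt_of_ne hne with h | h
  · exact key i j h hj
  · exact (key j i h hi).symm
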